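/- Let x be a finite set of d features, 1 ≤ k ≤ d−1, h a classifier on subsets of x, and ŷ a label. For any two features i and j, the full Shapley value order consistency holds: α_i ≥ α_j if and only if φ_i ≥ φ_j, where α_l = (1/k)·(1/C(d,k))·A_l is the EnsembleSHAP importance score (A_l counting k-subsets containing l classified ŷ), and φ_l = Σ_{m=0}^{d−1} (m!(d−m−1)!/d!) · Δ_l(m) is the Shapley value of the game whose value function sends S to p_ŷ(S) (with p_ŷ(S) = 1/C when |S| < k). -/

import Mathlib

open Finset

lemma count_ext_zero {α : Type*} [DecidableEq α] (b a : Finset α) (m : ℕ) (ham : m < a.card) :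
    ((b.powersetCard m).filter (fun S => a ⊆ S)) = ∅ := by
  apply filter_eq_empty_iff.2
  intro S hS haS
  rw [mem_powersetCard] at hS
  exact absurd (card_le_card haS) (by omega)

lemma count_ext {α : Type*} [DecidableEq α] (b a : Finset α) (hab : a ⊆ b) (m : ℕ)
    (ham : a.card ≤ m) :
    ((b.powersetCard m).filter (fun S => a ⊆ S)).card = (b.card - a.card).choose (m - a.card) := by
  rw [← Finset.card_sdiff_of_subset hab, ← Finset.card_powersetCard (m - a.card) (b \ a)]
  apply Finset.card_nbij' (fun S => S \ a) (fun T => a ∪ T)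
  · intro S hS
    simp only [mem_coe, mem_filter, mem_powersetCard] at hS
    simp only [mem_coe, mem_powersetCard]
    exact ⟨sdiff_subset_sdiff hS.1.1 (Subset.refl a), by rw [card_sdiff_of_subset hS.2, hS.1.2]⟩
  · intro T hT
    simp only [mem_coe, mem_powersetCard] at hT
    have hdisj : Disjoint a T := disjoint_sdiff.mono_right hT.1
    simp only [mem_coe, mem_filter, mem_powersetCard]
    refine ⟨⟨union_subset hab ((hT.1).trans sdiff_subset), ?_⟩, subset_union_left⟩
    rw [card_union_of_disjoint hdisj, hT.2]
    omega
  · intro S hS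
    simp only [mem_coe, mem_filter] at hS
    exact union_sdiff_of_subset hS.2
  · intro T hT
    simp only [mem_coe, mem_powersetCard] at hT
    exact union_sdiff_cancel_left (disjoint_sdiff.mono_right hT.1)

lemma swap_count {α β : Type*} (P : Finset α) (Z : Finset β) (r : β → α → Prop)
    [∀ z S, Decidable (r z S)] :
    ∑ S ∈ P, (Z.filter (fun z => r z S)).card = ∑ z ∈ Z, (P.filter (fun S => r z S)).card := by
  simp_rw [card_filter]
  rw [Finset.sum_comm]

lemma powersetCard_subset_eq_filter {α : Type*} [DecidableEq α] (s t : Finset α) (hst : s ⊆ t)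
    (k : ℕ) : s.powersetCard k = (t.powersetCard k).filter (fun z => z ⊆ s) := by
  ext z
  simp only [mem_powersetCard, mem_filter]
  exact ⟨fun ⟨h1, h2⟩ => ⟨⟨h1.trans hst, h2⟩, h1⟩, fun ⟨⟨_, h2⟩, h3⟩ => ⟨h3, h2⟩⟩
lemma sum_insert_count {α L : Type*} [DecidableEq α] [DecidableEq L] (x : Finset α)
    (h : Finset α → L) (yhat : L) (l : α) (hl : l ∈ x) (k m : ℕ) (hk1 : 1 ≤ k) (hm : k ≤ m + 1) :
    ∑ S ∈ (x.erase l).powersetCard m,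
        (((insert l S).powersetCard k).filter (fun z => h z = yhat)).card
    = ((x.powersetCard k).filter (fun z => l ∈ z ∧ h z = yhat)).card * (x.card - k).choose (m + 1 - k)
    + ((x.powersetCard k).filter (fun z => l ∉ z ∧ h z = yhat)).card *
        (if k ≤ m then (x.card - 1 - k).choose (m - k) else 0) := by
  have hx1 : 1 ≤ x.card := card_pos.2 ⟨l, hl⟩
  have step1 : ∀ S ∈ (x.erase l).powersetCard m,
      (((insert l S).powersetCard k).filter (fun z => h z = yhat)).card
      = (((x.powersetCard k).filter (fun z => h z = yhat)).filter (fun z => z.erase l ⊆ S)).card := by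
    intro S hS
    rw [mem_powersetCard] at hS
    have hsub : insert l S ⊆ x := insert_subset hl (hS.1.trans (erase_subset l x))
    rw [powersetCard_subset_eq_filter (insert l S) x hsub k, filter_comm]
    congr 1
    apply filter_congr
    intro z _
    simp [Finset.subset_insert_iff]
  rw [Finset.sum_congr rfl step1, swap_count]
  rw [← Finset.sum_filter_add_sum_filter_not
      ((x.powersetCard k).filter (fun z => h z = yhat)) (fun z => l ∈ z)]
  congr 1
  · rw [Finset.sum_congr rfl (g := fun z => (x.card - k).choose (m + 1 - k)) ?_, Finset.sum_const,
      smul_eq_mul]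
    · congr 2
      rw [filter_filter]
      apply filter_congr
      intro z _
      simp [and_comm]
    · intro z hz
      simp only [mem_filter, mem_powersetCard] at hz
      have h1 : z.erase l ⊆ x.erase l := erase_subset_erase l hz.1.1.1
      have h2 : (z.erase l).card = k - 1 := by rw [card_erase_of_mem hz.2, hz.1.1.2]
      rw [count_ext _ _ h1 m (by omega), card_erase_of_mem hl, h2]
      congr 1 <;> omega
  · rw [Finset.sum_congr rfl
      (g := fun z => if k ≤ m then (x.card - 1 - k).choose (m - k) else 0) ?_, Finset.sum_const,
      smul_eq_mul]
    · congr 2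
      rw [filter_filter]
      apply filter_congr
      intro z _
      simp [and_comm]
    · intro z hz
      simp only [mem_filter, mem_powersetCard] at hz
      have hzl : l ∉ z := hz.2
      have hze : z.erase l = z := erase_eq_of_notMem hzl
      rw [hze]
      have h1 : z ⊆ x.erase l := subset_erase.2 ⟨hz.1.1.1, hzl⟩
      by_cases hkm : k ≤ m
      · rw [if_pos hkm, count_ext _ _ h1 m (by omega : z.card ≤ m), card_erase_of_mem hl, hz.1.1.2]
      · rw [if_neg hkm, count_ext_zero _ _ m (by omega : m < z.card), card_empty]

lemma sum_self_count {α L : Type*} [DecidableEq α] [DecidableEq L] (x : Finset α)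
    (h : Finset α → L) (yhat : L) (l : α) (hl : l ∈ x) (k m : ℕ) (hkm : k ≤ m) :
    ∑ S ∈ (x.erase l).powersetCard m, ((S.powersetCard k).filter (fun z => h z = yhat)).card
    = ((x.powersetCard k).filter (fun z => l ∉ z ∧ h z = yhat)).card *
        (x.card - 1 - k).choose (m - k) := by
  have step1 : ∀ S ∈ (x.erase l).powersetCard m,
      ((S.powersetCard k).filter (fun z => h z = yhat)).card
      = ((((x.erase l).powersetCard k).filter (fun z => h z = yhat)).filter (fun z => z ⊆ S)).card := by
    intro S hS
    rw [mem_powersetCard] at hS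
    rw [powersetCard_subset_eq_filter S (x.erase l) hS.1 k, filter_comm]
  rw [Finset.sum_congr rfl step1, swap_count]
  rw [Finset.sum_congr rfl (g := fun z => (x.card - 1 - k).choose (m - k)) ?_, Finset.sum_const,
    smul_eq_mul]
  · congr 2
    have : (x.erase l).powersetCard k = (x.powersetCard k).filter (fun z => l ∉ z) := by
      ext z
      simp only [mem_powersetCard, mem_filter, subset_erase]
      tauto
    rw [this, filter_filter]
  · intro z hz
    simp only [mem_filter, mem_powersetCard] at hz
    rw [count_ext _ _ hz.1.1 m (by omega), card_erase_of_mem hl, hz.1.2]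
lemma delta_eq {α L : Type*} [DecidableEq α] [DecidableEq L] (C : ℕ) (hC1 : 1 ≤ C)
    (x : Finset α) (k : ℕ) (h : Finset α → L) (yhat : L) (p : Finset α → ℝ)
    (hplt : ∀ T : Finset α, T ⊆ x → T.card < k → p T = 1 / C)
    (hpge : ∀ T : Finset α, T ⊆ x → k ≤ T.card →
      p T = (((T.powersetCard k).filter (fun z => h z = yhat)).card : ℝ) /
        (T.card.choose k))
    (l : α) (hl : l ∈ x) (hk1 : 1 ≤ k) (m : ℕ) :
    ∑ S ∈ (x.erase l).powersetCard m, (p (insert l S) - p S)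
    = (if k ≤ m + 1 ∧ m < k then -((((x.card-1).choose (k-1) : ℕ) : ℝ)/C) else 0)
    + (if m + 1 < k then 0 else if m < k then 1
        else (((x.card-k).choose (m+1-k) : ℕ) : ℝ)/(((m+1).choose k : ℕ) : ℝ))
      * (((x.powersetCard k).filter (fun z => l ∈ z ∧ h z = yhat)).card : ℝ)
    + (if m < k then 0
        else (((x.card-1-k).choose (m-k) : ℕ) : ℝ) *
          (1/(((m+1).choose k : ℕ) : ℝ) - 1/((m.choose k : ℕ) : ℝ)))
      * (((x.powersetCard k).filter (fun z => l ∉ z ∧ h z = yhat)).card : ℝ) := by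
  have hC0 : (C : ℝ) ≠ 0 := by positivity
  have hmem : ∀ S ∈ (x.erase l).powersetCard m,
      S ⊆ x ∧ S.card = m ∧ l ∉ S ∧ insert l S ⊆ x ∧ (insert l S).card = m + 1 := by
    intro S hS
    rw [mem_powersetCard] at hS
    have hlS : l ∉ S := fun hc => (mem_erase.1 (hS.1 hc)).1 rfl
    exact ⟨hS.1.trans (erase_subset l x), hS.2, hlS,
      insert_subset hl (hS.1.trans (erase_subset l x)), by rw [card_insert_of_notMem hlS, hS.2]⟩
  rcases lt_or_ge m (k - 1) with hcase | hcase
  · -- m + 1 < k : everything is zero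
    have h1 : m + 1 < k := by omega
    rw [if_neg (by omega), if_pos h1, if_pos (by omega)]
    rw [Finset.sum_eq_zero]
    · ring
    intro S hS
    obtain ⟨hSx, hScard, hlS, hins, hinscard⟩ := hmem S hS
    rw [hplt _ hins (by omega), hplt _ hSx (by omega)]
    ring
  · -- k ≤ m + 1
    have hkm1 : k ≤ m + 1 := by omega
    have hins_sum : ∑ S ∈ (x.erase l).powersetCard m, p (insert l S)
        = ((((x.powersetCard k).filter (fun z => l ∈ z ∧ h z = yhat)).card : ℝ)
            * ((x.card - k).choose (m + 1 - k) : ℝ)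
          + (((x.powersetCard k).filter (fun z => l ∉ z ∧ h z = yhat)).card : ℝ)
            * (if k ≤ m then ((x.card - 1 - k).choose (m - k) : ℝ) else 0))
          / (((m+1).choose k : ℕ) : ℝ) := by
      have : ∀ S ∈ (x.erase l).powersetCard m, p (insert l S)
          = ((((insert l S).powersetCard k).filter (fun z => h z = yhat)).card : ℝ)
            / (((m+1).choose k : ℕ) : ℝ) := by
        intro S hS
        obtain ⟨_, _, _, hins, hinscard⟩ := hmem S hS
        rw [hpge _ hins (by omega), hinscard]
      rw [Finset.sum_congr rfl this, ← Finset.sum_div, ← Nat.cast_sum,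
        sum_insert_count x h yhat l hl k m hk1 hkm1]
      push_cast
      rfl
    rw [Finset.sum_sub_distrib, hins_sum]
    rcases lt_or_ge m k with hmk | hmk
    · -- m = k - 1
      have hk : k = m + 1 := by omega
      subst hk
      have hself : ∑ S ∈ (x.erase l).powersetCard m, p S
          = (((x.card - 1).choose m : ℕ) : ℝ) / C := by
        rw [Finset.sum_congr rfl (g := fun S => 1 / (C : ℝ))
          (fun S hS => hplt _ (hmem S hS).1 (by rw [(hmem S hS).2.1]; omega)), Finset.sum_const,
          card_powersetCard, card_erase_of_mem hl, nsmul_eq_mul]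
        ring
      rw [hself]
      split_ifs <;> try omega
      simp only [Nat.choose_self, Nat.sub_self, Nat.choose_zero_right, Nat.add_sub_cancel]
      push_cast
      ring
    · -- k ≤ m
      have hself : ∑ S ∈ (x.erase l).powersetCard m, p S
          = (((x.powersetCard k).filter (fun z => l ∉ z ∧ h z = yhat)).card : ℝ)
            * (((x.card - 1 - k).choose (m - k) : ℕ) : ℝ) / ((m.choose k : ℕ) : ℝ) := by
        have : ∀ S ∈ (x.erase l).powersetCard m, p S
            = (((S.powersetCard k).filter (fun z => h z = yhat)).card : ℝ)
              / ((m.choose k : ℕ) : ℝ) := by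
          intro S hS
          obtain ⟨hSx, hScard, _, _, _⟩ := hmem S hS
          rw [hpge _ hSx (by rw [hScard]; omega), hScard]
        rw [Finset.sum_congr rfl this, ← Finset.sum_div, ← Nat.cast_sum,
          sum_self_count x h yhat l hl k m hmk]
        push_cast
        ring
      rw [hself]
      have hc1 : (((m+1).choose k : ℕ) : ℝ) ≠ 0 := by
        have := Nat.choose_pos (show k ≤ m + 1 by omega)
        positivity
      have hc2 : ((m.choose k : ℕ) : ℝ) ≠ 0 := by
        have := Nat.choose_pos hmk
        positivity
      split_ifs <;> try omega
      field_simp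
      ring

noncomputable def wgt (d m : ℕ) : ℝ := (m.factorial * (d - m - 1).factorial : ℝ) / d.factorial
noncomputable def cA (d k m : ℕ) : ℝ :=
  if m + 1 < k then 0 else if m < k then 1
  else (((d-k).choose (m+1-k) : ℕ) : ℝ)/(((m+1).choose k : ℕ) : ℝ)
noncomputable def cB (d k m : ℕ) : ℝ :=
  if m < k then 0
  else (((d-1-k).choose (m-k) : ℕ) : ℝ) * (1/(((m+1).choose k : ℕ) : ℝ) - 1/((m.choose k : ℕ) : ℝ))
noncomputable def c0 (Cc d k m : ℕ) : ℝ :=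
  if k ≤ m + 1 ∧ m < k then -((((d-1).choose (k-1) : ℕ) : ℝ)/Cc) else 0

lemma wgt_pos (d m : ℕ) : 0 < wgt d m := by
  unfold wgt
  have := Nat.factorial_pos m
  have := Nat.factorial_pos (d - m - 1)
  have := Nat.factorial_pos d
  positivity

lemma cA_nonneg (d k m : ℕ) : 0 ≤ cA d k m := by
  unfold cA
  split_ifs <;> positivity

lemma cB_nonpos (d k m : ℕ) (hk : 1 ≤ k) : cB d k m ≤ 0 := by
  unfold cB
  split_ifs with hmk
  · exact le_refl 0
  · apply mul_nonpos_of_nonneg_of_nonpos (by positivity)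
    rw [sub_nonpos]
    have hpos : (0:ℝ) < ((m.choose k : ℕ) : ℝ) := by
      exact_mod_cast Nat.choose_pos (by omega : k ≤ m)
    have hle : ((m.choose k : ℕ) : ℝ) ≤ (((m+1).choose k : ℕ) : ℝ) := by
      exact_mod_cast Nat.choose_le_choose k (Nat.le_succ m)
    exact one_div_le_one_div_of_le hpos hle

lemma slope_pos (d k : ℕ) (hk1 : 1 ≤ k) (hkd : k ≤ d - 1) (hd2 : 2 ≤ d) :
    0 < ∑ m ∈ Finset.range d, wgt d m * (cA d k m - cB d k m) := by
  apply Finset.sum_pos'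
  · intro m _
    apply mul_nonneg (wgt_pos d m).le
    have := cA_nonneg d k m
    have := cB_nonpos d k m hk1
    linarith
  · refine ⟨k - 1, Finset.mem_range.2 (by omega), ?_⟩
    have hA : cA d k (k-1) = 1 := by
      unfold cA
      rw [if_neg (by omega), if_pos (by omega)]
    have hB : cB d k (k-1) = 0 := by
      unfold cB
      rw [if_pos (by omega)]
    rw [hA, hB]
    simpa using wgt_pos d (k-1)

/-- Full order consistency of EnsembleSHAP with the Shapley value: `α_i ≥ α_j` iff
`φ_i ≥ φ_j`, where `φ_l = Σ_{m=0}^{d-1} (m!(d-m-1)!/d!) · Δ_l(m)` is the Shapley value of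
the game with value function `p_ŷ` (with `p_ŷ(S) = 1/C` when `|S| < k`). -/
theorem ensembleSHAP_shapley_order_consistency {α L : Type*} [DecidableEq α] [DecidableEq L]
    [Fintype L] (C : ℕ) (hC : Fintype.card L = C) (hC1 : 1 ≤ C)
    (x : Finset α) (d k : ℕ) (h : Finset α → L) (yhat : L) (i j : α)
    (p : Finset α → ℝ)
    (hd : x.card = d) (hi : i ∈ x) (hj : j ∈ x) (hk1 : 1 ≤ k) (hkd : k ≤ d - 1)
    (hplt : ∀ T : Finset α, T ⊆ x → T.card < k → p T = 1 / C)
    (hpge : ∀ T : Finset α, T ⊆ x → k ≤ T.card →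
      p T = (((T.powersetCard k).filter (fun z => h z = yhat)).card : ℝ) /
        (T.card.choose k)) :
    ((1 : ℝ) / k) * (1 / (d.choose k)) *
        (((x.powersetCard k).filter (fun z => j ∈ z ∧ h z = yhat)).card : ℝ)
      ≤ ((1 : ℝ) / k) * (1 / (d.choose k)) *
        (((x.powersetCard k).filter (fun z => i ∈ z ∧ h z = yhat)).card : ℝ)
    ↔
    ∑ m ∈ Finset.range d, ((m.factorial * (d - m - 1).factorial : ℝ) / d.factorial) *
        (∑ S ∈ (x.erase j).powersetCard m, (p (insert j S) - p S))
      ≤ ∑ m ∈ Finset.range d, ((m.factorial * (d - m - 1).factorial : ℝ) / d.factorial) *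
        (∑ S ∈ (x.erase i).powersetCard m, (p (insert i S) - p S)) := by
  subst hd
  have hd2 : 2 ≤ x.card := by omega
  have hkx : k ≤ x.card := by omega
  have hN : ∀ l : α,
      ((x.powersetCard k).filter (fun z => l ∈ z ∧ h z = yhat)).card
      + ((x.powersetCard k).filter (fun z => l ∉ z ∧ h z = yhat)).card
      = ((x.powersetCard k).filter (fun z => h z = yhat)).card := by
    intro l
    rw [show (x.powersetCard k).filter (fun z => l ∈ z ∧ h z = yhat)
        = ((x.powersetCard k).filter (fun z => h z = yhat)).filter (fun z => l ∈ z) from by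
      rw [filter_filter]; exact filter_congr fun z _ => by tauto]
    rw [show (x.powersetCard k).filter (fun z => l ∉ z ∧ h z = yhat)
        = ((x.powersetCard k).filter (fun z => h z = yhat)).filter (fun z => ¬ l ∈ z) from by
      rw [filter_filter]; exact filter_congr fun z _ => by tauto]
    exact card_filter_add_card_filter_not _
  have key : ∀ l : α, l ∈ x →
      ∑ m ∈ Finset.range x.card, ((m.factorial * (x.card - m - 1).factorial : ℝ) / x.card.factorial) *
        (∑ S ∈ (x.erase l).powersetCard m, (p (insert l S) - p S))
      = (∑ m ∈ Finset.range x.card, wgt x.card m * (c0 C x.card k m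
          + cB x.card k m * (((x.powersetCard k).filter (fun z => h z = yhat)).card : ℝ)))
        + (∑ m ∈ Finset.range x.card, wgt x.card m * (cA x.card k m - cB x.card k m))
          * (((x.powersetCard k).filter (fun z => l ∈ z ∧ h z = yhat)).card : ℝ) := by
    intro l hl
    have hBR : (((x.powersetCard k).filter (fun z => l ∉ z ∧ h z = yhat)).card : ℝ)
        = (((x.powersetCard k).filter (fun z => h z = yhat)).card : ℝ)
          - (((x.powersetCard k).filter (fun z => l ∈ z ∧ h z = yhat)).card : ℝ) := by
      have := hN l
      push_cast [← this]
      ring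
    calc ∑ m ∈ Finset.range x.card,
          ((m.factorial * (x.card - m - 1).factorial : ℝ) / x.card.factorial) *
          (∑ S ∈ (x.erase l).powersetCard m, (p (insert l S) - p S))
        = ∑ m ∈ Finset.range x.card, (wgt x.card m * (c0 C x.card k m
            + cB x.card k m * (((x.powersetCard k).filter (fun z => h z = yhat)).card : ℝ))
          + wgt x.card m * (cA x.card k m - cB x.card k m)
            * (((x.powersetCard k).filter (fun z => l ∈ z ∧ h z = yhat)).card : ℝ)) := by
          refine Finset.sum_congr rfl fun m _ => ?_
          rw [delta_eq C hC1 x k h yhat p hplt hpge l hl hk1 m, hBR]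
          unfold wgt cA cB c0
          ring
      _ = _ := by
          rw [Finset.sum_add_distrib, ← Finset.sum_mul]
  have hSL := slope_pos x.card k hk1 hkd hd2
  have h1 : (0:ℝ) < ((1 : ℝ) / k) * (1 / (x.card.choose k)) := by
    have h2 : (0:ℝ) < (x.card.choose k : ℝ) := by exact_mod_cast Nat.choose_pos hkx
    have h3 : (0:ℝ) < (k : ℝ) := by exact_mod_cast hk1
    positivity
  rw [key i hi, key j hj]
  constructor <;> intro hh
  · have hAA : (((x.powersetCard k).filter (fun z => j ∈ z ∧ h z = yhat)).card : ℝ)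
        ≤ (((x.powersetCard k).filter (fun z => i ∈ z ∧ h z = yhat)).card : ℝ) :=
      le_of_mul_le_mul_left hh h1
    have := mul_le_mul_of_nonneg_left hAA hSL.le
    linarith
  · have hAA : (((x.powersetCard k).filter (fun z => j ∈ z ∧ h z = yhat)).card : ℝ)
        ≤ (((x.powersetCard k).filter (fun z => i ∈ z ∧ h z = yhat)).card : ℝ) :=
      le_of_mul_le_mul_left (by linarith) hSL
    exact mul_le_mul_of_nonneg_left hAA h1.le
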